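/- For a graph G on n ≥ 2 vertices, maxdc(G) = 2 if and only if G is the disjoint union of a complete graph on an even number of vertices and a (possibly empty) set of isolated vertices. -/

import Mathlib

variable {V : Type*}

/-- An orientation of a simple graph: a relation choosing a direction for each edge. -/
def IsOrientation (G : SimpleGraph V) (r : V → V → Prop) : Prop :=
  (∀ u v, G.Adj u v ↔ (r u v ∨ r v u)) ∧ ∀ u v, r u v → ¬ r v u

/-- A relation is acyclic if it has no directed cycle. -/
def AcyclicRel (r : V → V → Prop) : Prop := ∀ v, ¬ Relation.TransGen r v v

/-- Indegree of a vertex in an orientation. -/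
noncomputable def inDeg (r : V → V → Prop) (v : V) : ℕ := {u | r u v}.ncard

/-- Dual-critical: there is an acyclic orientation in which all vertices except one
have odd indegree. -/
def DualCritical (G : SimpleGraph V) : Prop :=
  ∃ r : V → V → Prop, IsOrientation G r ∧ AcyclicRel r ∧
    ∃ s : V, ∀ v : V, v ≠ s → Odd (inDeg r v)

/-- Dual-critical via a good ordering: an enumeration of all vertices such that every
vertex except the first has an odd number of neighbours among its predecessors. -/
def DualCriticalOrd (G : SimpleGraph V) : Prop :=
  ∃ (n : ℕ) (e : Fin n ≃ V), ∀ i : Fin n, 0 < i.val →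
    Odd ({j : Fin n | j < i ∧ G.Adj (e j) (e i)}.ncard)

/-- Number of edges between two (disjoint) vertex sets. -/
noncomputable def cut (G : SimpleGraph V) (A B : Set V) : ℕ :=
  {p : V × V | p.1 ∈ A ∧ p.2 ∈ B ∧ G.Adj p.1 p.2}.ncard

/-- A good `k`-partition: an ordered partition into nonempty classes such that each class
after the first is joined to the union of the previous ones by an odd number of edges. -/
def GoodPartition (G : SimpleGraph V) {k : ℕ} (P : Fin k → Set V) : Prop :=
  (∀ i, (P i).Nonempty) ∧ Pairwise (Function.onFun Disjoint P) ∧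
  (⋃ i, P i) = Set.univ ∧
  ∀ i : Fin k, 0 < i.val → Odd (cut G (⋃ j ∈ {j : Fin k | j < i}, P j) (P i))

def KDualCritical (G : SimpleGraph V) (k : ℕ) : Prop :=
  ∃ P : Fin k → Set V, GoodPartition G P

noncomputable def maxdc (G : SimpleGraph V) : ℕ := sSup {k | KDualCritical G k}

/-- A `T`-odd orientation: vertices in `T` have odd indegree, others even. -/
def TOdd (r : V → V → Prop) (T : Set V) : Prop :=
  ∀ v, (v ∈ T → Odd (inDeg r v)) ∧ (v ∉ T → Even (inDeg r v))

/-- Super-dual-critical: deleting any vertex leaves a dual-critical graph. -/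
def SuperDualCritical (G : SimpleGraph V) : Prop :=
  ∀ v : V, DualCriticalOrd (G.induce ({v}ᶜ : Set V))

section AuxProof

open Finset

variable [Fintype V]

open scoped Classical

/-- Canonical finset of a set in a finite vertex type. -/
private noncomputable def fset (s : Set V) : Finset V := (Set.toFinite s).toFinset

private lemma mem_fset {s : Set V} {x : V} : x ∈ fset s ↔ x ∈ s :=
  Set.Finite.mem_toFinset _

private lemma fset_singleton (y : V) : fset ({y} : Set V) = {y} := by
  ext x; simp [mem_fset]

private lemma fset_pair {y z : V} (h : y ≠ z) : fset ({y, z} : Set V) = ({y, z} : Finset V) := by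
  ext x; simp [mem_fset]

private lemma cut_eq_sum (G : SimpleGraph V) (A B : Set V) :
    cut G A B = ∑ v ∈ fset B, (fset A ∩ G.neighborFinset v).card := by
  classical
  rw [cut, Set.ncard_eq_toFinset_card _ (Set.toFinite _)]
  have hset : (Set.toFinite {p : V × V | p.1 ∈ A ∧ p.2 ∈ B ∧ G.Adj p.1 p.2}).toFinset
      = Finset.univ.filter (fun p : V × V => p.1 ∈ A ∧ p.2 ∈ B ∧ G.Adj p.1 p.2) := by
    ext p; simp [Set.Finite.mem_toFinset]
  rw [hset, Finset.card_eq_sum_card_fiberwise (f := Prod.snd) (t := fset B)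
    (by intro p hp; simp only [Finset.mem_coe, Finset.mem_filter] at hp; exact mem_fset.mpr hp.2.2.1)]
  refine Finset.sum_congr rfl fun v hv => ?_
  refine Finset.card_bij (fun p _ => p.1) ?_ ?_ ?_
  · rintro ⟨a, b⟩ hp
    simp only [Finset.mem_filter, Finset.mem_univ, true_and] at hp
    obtain ⟨⟨ha, hb, hadj⟩, rfl⟩ := hp
    simp only [Finset.mem_inter, mem_fset, SimpleGraph.mem_neighborFinset]
    exact ⟨ha, hadj.symm⟩
  · rintro ⟨a, b⟩ hp ⟨a', b'⟩ hp' hh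
    simp only [Finset.mem_filter, Finset.mem_univ, true_and] at hp hp'
    simp only at hh
    simp [hh, hp.2, hp'.2]
  · intro u hu
    simp only [Finset.mem_inter, mem_fset, SimpleGraph.mem_neighborFinset] at hu
    exact ⟨(u, v), Finset.mem_filter.mpr ⟨Finset.mem_filter.mpr
      ⟨Finset.mem_univ _, hu.1, mem_fset.mp hv, hu.2.symm⟩, rfl⟩, rfl⟩

private lemma even_cut_self (G : SimpleGraph V) (B : Set V) : Even (cut G B B) := by
  classical
  rw [cut, Set.ncard_eq_toFinset_card _ (Set.toFinite _)]
  rw [even_iff_two_dvd, ← ZMod.natCast_eq_zero_iff]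
  rw [Finset.card_eq_sum_ones, Nat.cast_sum]
  refine Finset.sum_involution (fun p _ => p.swap) ?_ ?_ ?_ ?_
  · intro a ha; decide
  · intro a ha hne
    have hadj : G.Adj a.1 a.2 := ((Set.Finite.mem_toFinset _).mp ha).2.2
    intro hsw
    exact hadj.ne (by simpa [Prod.ext_iff] using congrArg Prod.fst hsw.symm)
  · intro a ha
    have h := (Set.Finite.mem_toFinset _).mp ha
    exact (Set.Finite.mem_toFinset _).mpr ⟨h.2.1, h.1, h.2.2.symm⟩
  · intro a ha; simp

private lemma cut_parity (G : SimpleGraph V) (A B : Set V) (hd : Disjoint A B) :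
    (Odd (cut G A B) ↔
      Odd (∑ v ∈ fset B, (fset (A ∪ B) ∩ G.neighborFinset v).card)) := by
  have h1 : ∀ v, (fset (A ∪ B) ∩ G.neighborFinset v).card
      = (fset A ∩ G.neighborFinset v).card + (fset B ∩ G.neighborFinset v).card := by
    intro v
    rw [← Finset.card_union_of_disjoint]
    · congr 1
      ext u
      simp only [Finset.mem_inter, mem_fset, Set.mem_union, Finset.mem_union]
      tauto
    · refine Finset.disjoint_left.mpr fun u hu hu' => ?_
      exact Set.disjoint_left.mp hd (mem_fset.mp (Finset.mem_inter.mp hu).1)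
        (mem_fset.mp (Finset.mem_inter.mp hu').1)
  rw [Finset.sum_congr rfl (fun v _ => h1 v), Finset.sum_add_distrib,
    ← cut_eq_sum, ← cut_eq_sum]
  have he := even_cut_self G B
  rw [Nat.odd_add]
  tauto

private lemma cut_parity_univ (G : SimpleGraph V) (A B : Set V) (hd : Disjoint A B)
    (hu : A ∪ B = Set.univ) :
    (Odd (cut G A B) ↔ Odd (∑ v ∈ fset B, G.degree v)) := by
  rw [cut_parity G A B hd, hu]
  have huniv : fset (Set.univ : Set V) = Finset.univ := by ext x; simp [mem_fset]
  refine (iff_of_eq (congrArg Odd (Finset.sum_congr rfl fun v _ => ?_)))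
  rw [huniv, Finset.univ_inter, SimpleGraph.card_neighborFinset_eq_degree]

private lemma degree_split (G : SimpleGraph V) (C : Set V) (u : V) :
    G.degree u = (fset (Cᶜ) ∩ G.neighborFinset u).card
      + (fset C ∩ G.neighborFinset u).card := by
  rw [← Finset.card_union_of_disjoint]
  · rw [← SimpleGraph.card_neighborFinset_eq_degree]
    congr 1
    ext z
    simp only [Finset.mem_union, Finset.mem_inter, mem_fset, Set.mem_compl_iff]
    tauto
  · refine Finset.disjoint_left.mpr fun z hz hz' => ?_
    exact (mem_fset.mp (Finset.mem_inter.mp hz).1) (mem_fset.mp (Finset.mem_inter.mp hz').1)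

private lemma biUnion_lt_eq_zero {k : ℕ} (P : Fin k → Set V) (i : Fin k) (hi : i.val = 1)
    (z : Fin k) (hz : z.val = 0) : (⋃ j ∈ {j : Fin k | j < i}, P j) = P z := by
  have hset : {j : Fin k | j < i} = {z} := by
    ext j
    simp only [Set.mem_setOf_eq, Set.mem_singleton_iff, Fin.lt_def, hi, Fin.ext_iff, hz]
    omega
  rw [hset, Set.biUnion_singleton]

private lemma biUnion_lt_eq_pair {k : ℕ} (P : Fin k → Set V) (i : Fin k) (hi : i.val = 2)
    (z0 : Fin k) (hz0 : z0.val = 0) (z1 : Fin k) (hz1 : z1.val = 1) :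
    (⋃ j ∈ {j : Fin k | j < i}, P j) = P z0 ∪ P z1 := by
  have hset : {j : Fin k | j < i} = {z0, z1} := by
    ext j
    simp only [Set.mem_setOf_eq, Set.mem_insert_iff, Set.mem_singleton_iff, Fin.lt_def, hi,
      Fin.ext_iff, hz0, hz1]
    omega
  rw [hset, Set.biUnion_pair]

private lemma good2 (G : SimpleGraph V) (B : Set V) (h1 : B.Nonempty)
    (h2 : (Bᶜ : Set V).Nonempty) (h3 : Odd (cut G Bᶜ B)) : KDualCritical G 2 := by
  refine ⟨![Bᶜ, B], ?_, ?_, ?_, ?_⟩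
  · intro i; fin_cases i <;> simpa
  · intro i j hij
    fin_cases i <;> fin_cases j
    · exact absurd rfl hij
    · simpa [Function.onFun] using (disjoint_compl_left : Disjoint (Bᶜ) B)
    · simpa [Function.onFun] using (disjoint_compl_right : Disjoint B (Bᶜ))
    · exact absurd rfl hij
  · ext x
    simp only [Set.mem_iUnion, Set.mem_univ, iff_true]
    by_cases hx : x ∈ B
    · exact ⟨1, by simpa⟩
    · exact ⟨0, by simpa⟩
  · intro i hi
    have hlt := i.isLt
    have hival : i.val = 1 := by omega
    rw [biUnion_lt_eq_zero _ i hival ⟨0, by omega⟩ rfl]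
    have hieq : i = ⟨1, by omega⟩ := Fin.ext (by simpa using hival)
    rw [hieq]
    exact h3

private lemma kdc_three_of (G : SimpleGraph V) (C : Set V) (y : V) (hyC : y ∉ C)
    (hCne : C.Nonempty) (hAne : ((Cᶜ \ {y} : Set V)).Nonempty)
    (h1 : Odd ((fset (Cᶜ) ∩ G.neighborFinset y).card))
    (h2 : Odd (∑ v ∈ fset C, G.degree v)) : KDualCritical G 3 := by
  classical
  have dAB : Disjoint (Cᶜ \ {y} : Set V) {y} :=
    Set.disjoint_singleton_right.mpr (by simp)
  have dAC : Disjoint (Cᶜ \ {y} : Set V) C :=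
    (disjoint_compl_left (a := C)).symm.mono_right Set.diff_subset |>.symm
  have dBC : Disjoint ({y} : Set V) C := Set.disjoint_singleton_left.mpr hyC
  have hun : (Cᶜ \ {y}) ∪ {y} = (Cᶜ : Set V) :=
    Set.diff_union_of_subset (Set.singleton_subset_iff.mpr hyC)
  refine ⟨![Cᶜ \ {y}, {y}, C], ?_, ?_, ?_, ?_⟩
  · intro i
    fin_cases i
    · simpa using hAne
    · simpa using Set.singleton_nonempty y
    · simpa using hCne
  · intro i j hij
    fin_cases i <;> fin_cases j
    · exact absurd rfl hij
    · simpa [Function.onFun] using dAB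
    · simpa [Function.onFun] using dAC
    · simpa [Function.onFun] using dAB.symm
    · exact absurd rfl hij
    · simpa [Function.onFun] using dBC
    · simpa [Function.onFun] using dAC.symm
    · simpa [Function.onFun] using dBC.symm
    · exact absurd rfl hij
  · ext x
    simp only [Set.mem_iUnion, Set.mem_univ, iff_true]
    by_cases hx : x ∈ C
    · exact ⟨2, by simpa⟩
    · by_cases hxy : x = y
      · exact ⟨1, by simpa⟩
      · exact ⟨0, by simp [hx, hxy]⟩
  · intro i hi
    have hlt := i.isLt
    by_cases hival : i.val = 1
    · rw [biUnion_lt_eq_zero _ i hival ⟨0, by omega⟩ rfl]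
      have hieq : i = ⟨1, by omega⟩ := Fin.ext (by simpa using hival)
      rw [hieq]
      show Odd (cut G (Cᶜ \ {y}) {y})
      rw [cut_parity G _ _ dAB, hun, fset_singleton, Finset.sum_singleton]
      exact h1
    · have hival2 : i.val = 2 := by omega
      rw [biUnion_lt_eq_pair _ i hival2 ⟨0, by omega⟩ rfl ⟨1, by omega⟩ rfl]
      have hieq : i = ⟨2, by omega⟩ := Fin.ext (by simpa using hival2)
      rw [hieq]
      show Odd (cut G ((Cᶜ \ {y}) ∪ {y}) C)
      rw [hun, cut_parity_univ G _ _ disjoint_compl_left (Set.compl_union_self _)]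
      exact h2

private lemma kdc_le_card (G : SimpleGraph V) {k : ℕ} (h : KDualCritical G k) :
    k ≤ Fintype.card V := by
  obtain ⟨P, hne, hdis, -, -⟩ := h
  choose f hf using hne
  have hinj : Function.Injective f := by
    intro i j hij
    by_contra hne'
    exact Set.disjoint_left.mp (hdis hne') (hf i) (hij ▸ hf j)
  simpa using Fintype.card_le_of_injective f hinj

private lemma kdc_one (G : SimpleGraph V) (hV : Nonempty V) : KDualCritical G 1 := by
  refine ⟨fun _ => Set.univ, fun _ => Set.univ_nonempty, ?_, by rw [Set.iUnion_const], ?_⟩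
  · intro i j hij; exact absurd (Subsingleton.elim i j) hij
  · intro i hi; have := i.isLt; omega

private lemma kdc_two_iff (G : SimpleGraph V) (h : 2 ≤ Fintype.card V) :
    KDualCritical G 2 ↔ ∃ v, Odd (G.degree v) := by
  constructor
  · rintro ⟨P, hne, hdis, huniv, hcut⟩
    have h01 : (0 : Fin 2) ≠ 1 := by decide
    have hcompl : P 0 = (P 1)ᶜ := by
      apply subset_antisymm
      · exact Set.subset_compl_iff_disjoint_right.mpr (hdis h01)
      · intro x hx
        have hxu : x ∈ ⋃ i, P i := huniv ▸ Set.mem_univ x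
        rcases Set.mem_iUnion.mp hxu with ⟨i, hi⟩
        fin_cases i
        · exact hi
        · exact absurd hi hx
    have hc := hcut 1 (by decide)
    rw [biUnion_lt_eq_zero P 1 (by decide) 0 (by decide), hcompl,
      cut_parity_univ G _ _ disjoint_compl_left (Set.compl_union_self _)] at hc
    by_contra hno
    push_neg at hno
    have heven : Even (∑ v ∈ fset (P 1), G.degree v) := by
      rw [Finset.even_sum_iff_even_card_odd]
      have hfe : Finset.filter (fun v => Odd (G.degree v)) (fset (P 1)) = ∅ :=
        Finset.filter_false_of_mem (fun v _ => by simpa using hno v)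
      rw [hfe]; simp
    exact (Nat.not_odd_iff_even.mpr heven) hc
  · rintro ⟨v, hv⟩
    obtain ⟨u, hu⟩ := Fintype.exists_ne_of_one_lt_card (by omega) v
    apply good2 G {v} (Set.singleton_nonempty v) ⟨u, hu⟩
    rw [cut_parity_univ G _ _ disjoint_compl_left (Set.compl_union_self _),
      fset_singleton, Finset.sum_singleton]
    exact hv

private lemma cut_struct (G : SimpleGraph V) (K : Set V) (hcl : G.IsClique K)
    (hedge : ∀ u v, G.Adj u v → u ∈ K ∧ v ∈ K) (A B : Set V) (hd : Disjoint A B) :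
    cut G A B = (K ∩ A).ncard * (K ∩ B).ncard := by
  classical
  rw [cut]
  have hset : {p : V × V | p.1 ∈ A ∧ p.2 ∈ B ∧ G.Adj p.1 p.2} = (K ∩ A) ×ˢ (K ∩ B) := by
    ext ⟨u, v⟩
    simp only [Set.mem_setOf_eq, Set.mem_prod, Set.mem_inter_iff]
    constructor
    · rintro ⟨ha, hb, hadj⟩
      obtain ⟨hk1, hk2⟩ := hedge u v hadj
      exact ⟨⟨hk1, ha⟩, hk2, hb⟩
    · rintro ⟨⟨hK1, ha⟩, hK2, hb⟩
      refine ⟨ha, hb, hcl hK1 hK2 ?_⟩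
      rintro rfl
      exact Set.disjoint_left.mp hd ha hb
  rw [hset, Set.ncard_eq_toFinset_card', Set.toFinset_prod, Finset.card_product,
    ← Set.ncard_eq_toFinset_card', ← Set.ncard_eq_toFinset_card']

private lemma no_good_ge3 (G : SimpleGraph V) (K : Set V) (hcl : G.IsClique K)
    (hedge : ∀ u v, G.Adj u v → u ∈ K ∧ v ∈ K) (k : ℕ) (hk : 3 ≤ k) :
    ¬ KDualCritical G k := by
  rintro ⟨P, hne, hdis, huniv, hcut⟩
  have hd01 : Disjoint (P ⟨0, by omega⟩) (P ⟨1, by omega⟩) :=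
    hdis (by simp [Fin.ext_iff])
  have hd02 : Disjoint (P ⟨0, by omega⟩) (P ⟨2, by omega⟩) :=
    hdis (by simp [Fin.ext_iff])
  have hd12 : Disjoint (P ⟨1, by omega⟩) (P ⟨2, by omega⟩) :=
    hdis (by simp [Fin.ext_iff])
  have hc1 := hcut ⟨1, by omega⟩ (by simp)
  have hc2 := hcut ⟨2, by omega⟩ (by simp)
  rw [biUnion_lt_eq_zero P _ rfl ⟨0, by omega⟩ rfl,
    cut_struct G K hcl hedge _ _ hd01] at hc1
  rw [biUnion_lt_eq_pair P _ rfl ⟨0, by omega⟩ rfl ⟨1, by omega⟩ rfl,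
    cut_struct G K hcl hedge _ _ (Disjoint.union_left hd02 hd12)] at hc2
  have hsplit : (K ∩ (P ⟨0, by omega⟩ ∪ P ⟨1, by omega⟩)).ncard
      = (K ∩ P ⟨0, by omega⟩).ncard + (K ∩ P ⟨1, by omega⟩).ncard := by
    rw [Set.inter_union_distrib_left]
    exact Set.ncard_union_eq
      (hd01.mono Set.inter_subset_right Set.inter_subset_right)
      (Set.toFinite _) (Set.toFinite _)
  rw [hsplit, Nat.odd_mul] at hc2
  rw [Nat.odd_mul] at hc1
  obtain ⟨ha, hb⟩ := hc1
  have hab := hc2.1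
  rw [Nat.odd_iff] at ha hb hab
  omega

private lemma stepA (G : SimpleGraph V) (h3 : ¬ KDualCritical G 3)
    (hcard : 3 ≤ Fintype.card V) (w u : V) (hw : Odd (G.degree w)) (hu : u ≠ w) :
    (Odd (G.degree u) ↔ G.Adj w u) := by
  classical
  have key : Even ((fset ({w}ᶜ : Set V) ∩ G.neighborFinset u).card) := by
    rw [← Nat.not_odd_iff_even]
    intro hodd
    apply h3
    apply kdc_three_of G {w} u (by simpa using hu) (Set.singleton_nonempty w) ?_ hodd ?_
    · have hsub : ({w, u} : Finset V) ⊆ Finset.univ := Finset.subset_univ _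
      have hcard2 : ({w, u} : Finset V).card ≤ 2 :=
        (Finset.card_insert_le _ _).trans (by simp)
      have hpos : 0 < (Finset.univ \ ({w, u} : Finset V)).card := by
        rw [Finset.card_sdiff_of_subset hsub, Finset.card_univ]; omega
      obtain ⟨z, hz⟩ := Finset.card_pos.mp hpos
      rw [Finset.mem_sdiff, Finset.mem_insert, Finset.mem_singleton] at hz
      push_neg at hz
      exact ⟨z, by simp [hz.2.1, hz.2.2]⟩
    · rw [fset_singleton, Finset.sum_singleton]
      exact hw
  have hsplit := degree_split G ({w} : Set V) u
  rw [fset_singleton] at hsplit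
  have hsing : (({w} : Finset V) ∩ G.neighborFinset u).card
      = if G.Adj w u then 1 else 0 := by
    by_cases hadj : G.Adj w u
    · rw [if_pos hadj, Finset.singleton_inter_of_mem
        ((SimpleGraph.mem_neighborFinset _ _ _).mpr hadj.symm), Finset.card_singleton]
    · rw [if_neg hadj, Finset.singleton_inter_of_notMem
        (fun hmem => hadj ((SimpleGraph.mem_neighborFinset _ _ _).mp hmem).symm),
        Finset.card_empty]
  obtain ⟨m, hm⟩ := key
  by_cases hadj : G.Adj w u
  · rw [if_pos hadj] at hsing
    refine ⟨fun _ => hadj, fun _ => ?_⟩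
    rw [hsplit, hsing, hm, Nat.odd_iff]
    omega
  · rw [if_neg hadj] at hsing
    refine ⟨fun hodd => ?_, fun hc => absurd hc hadj⟩
    rw [hsplit, hsing, hm, Nat.odd_iff] at hodd
    omega

end AuxProof

theorem stmt18 [Fintype V] (G : SimpleGraph V) (h : 2 ≤ Fintype.card V) :
    maxdc G = 2 ↔
      ∃ K : Set V, K.Nonempty ∧ Even K.ncard ∧ G.IsClique K ∧
        ∀ u v : V, G.Adj u v → u ∈ K ∧ v ∈ K := by
  classical
  have hVne : Nonempty V := Fintype.card_pos_iff.mp (by omega)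
  have hbdd : BddAbove {k | KDualCritical G k} :=
    ⟨Fintype.card V, fun k hk => kdc_le_card G hk⟩
  constructor
  · intro hmax
    have hsup : sSup {k | KDualCritical G k} = 2 := hmax
    have h2mem : KDualCritical G 2 := by
      have hm := Nat.sSup_mem (⟨1, kdc_one G hVne⟩ : Set.Nonempty {k | KDualCritical G k}) hbdd
      rw [hsup] at hm
      exact hm
    have h3not : ¬ KDualCritical G 3 := by
      intro hc
      have hle : (3 : ℕ) ≤ sSup {k | KDualCritical G k} := le_csSup hbdd hc
      omega
    obtain ⟨w, hw⟩ := (kdc_two_iff G h).mp h2mem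
    rcases eq_or_lt_of_le h with hcard2 | hcard3
    · -- two vertices
      obtain ⟨u, hu⟩ : ∃ u, G.Adj w u := by
        by_contra hno
        push_neg at hno
        have hdz : G.degree w = 0 := by
          rw [← SimpleGraph.card_neighborFinset_eq_degree, Finset.card_eq_zero]
          ext z
          simp [SimpleGraph.mem_neighborFinset, hno z]
        rw [hdz] at hw
        simp [Nat.odd_iff] at hw
      have hwu : w ≠ u := G.ne_of_adj hu
      have hall : ∀ x : V, x = w ∨ x = u := by
        intro x
        by_contra hx
        push_neg at hx
        have hc3 : ({w, u, x} : Finset V).card = 3 := by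
          rw [Finset.card_insert_of_notMem (by simp [hwu, Ne.symm hx.1]),
            Finset.card_insert_of_notMem (by simp [Ne.symm hx.2]), Finset.card_singleton]
        have hle := Finset.card_le_univ ({w, u, x} : Finset V)
        rw [hc3] at hle
        omega
      refine ⟨Set.univ, Set.univ_nonempty, ?_, ?_, fun a b _ => ⟨trivial, trivial⟩⟩
      · rw [Set.ncard_univ, Nat.card_eq_fintype_card, ← hcard2]
        exact ⟨1, rfl⟩
      · intro a _ b _ hab
        rcases hall a with rfl | rfl <;> rcases hall b with rfl | rfl
        · exact absurd rfl hab
        · exact hu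
        · exact hu.symm
        · exact absurd rfl hab
    · have hcard3' : 3 ≤ Fintype.card V := hcard3
      set K : Set V := {v | Odd (G.degree v)} with hK
      have hwK : w ∈ K := hw
      have hKcl : G.IsClique K := by
        intro a ha b hb hab
        exact (stepA G h3not hcard3' a b ha (Ne.symm hab)).mp hb
      have hedgeK : ∀ x y : V, G.Adj x y → x ∈ K ∧ y ∈ K := by
        intro x y hxy
        by_cases hx : x ∈ K
        · exact ⟨hx, (stepA G h3not hcard3' x y hx (G.ne_of_adj hxy).symm).mpr hxy⟩
        · by_cases hy : y ∈ K
          · exact absurd ((stepA G h3not hcard3' y x hy (G.ne_of_adj hxy)).mpr hxy.symm) hx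
          · exfalso
            have hwx : w ≠ x := fun he => hx (he ▸ hwK)
            have hwy : w ≠ y := fun he => hy (he ▸ hwK)
            have hnwx : ¬ G.Adj w x := fun ha =>
              hx ((stepA G h3not hcard3' w x hw (Ne.symm hwx)).mpr ha)
            have hnwy : ¬ G.Adj w y := fun ha =>
              hy ((stepA G h3not hcard3' w y hw (Ne.symm hwy)).mpr ha)
            obtain ⟨z, hz⟩ : ∃ z, G.Adj w z := by
              by_contra hno
              push_neg at hno
              have hdz : G.degree w = 0 := by
                rw [← SimpleGraph.card_neighborFinset_eq_degree, Finset.card_eq_zero]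
                ext t
                simp [SimpleGraph.mem_neighborFinset, hno t]
              rw [hdz] at hw
              simp [Nat.odd_iff] at hw
            have hzK : Odd (G.degree z) :=
              (stepA G h3not hcard3' w z hw (G.ne_of_adj hz).symm).mpr hz
            have hzx : z ≠ x := fun he => hx (he ▸ hzK)
            have hzy : z ≠ y := fun he => hy (he ▸ hzK)
            have hzw : z ≠ w := (G.ne_of_adj hz).symm
            apply h3not
            refine kdc_three_of G {w, x} y ?_ ⟨w, by simp⟩ ⟨z, ?_⟩ ?_ ?_
            · simp only [Set.mem_insert_iff, Set.mem_singleton_iff, not_or]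
              exact ⟨Ne.symm hwy, (G.ne_of_adj hxy).symm⟩
            · simp only [Set.mem_diff, Set.mem_compl_iff, Set.mem_insert_iff,
                Set.mem_singleton_iff, not_or]
              exact ⟨⟨hzw, hzx⟩, hzy⟩
            · have hC : (fset ({w, x} : Set V) ∩ G.neighborFinset y).card = 1 := by
                have hCe : fset ({w, x} : Set V) ∩ G.neighborFinset y = {x} := by
                  ext t
                  simp only [Finset.mem_inter, mem_fset, Set.mem_insert_iff,
                    Set.mem_singleton_iff, SimpleGraph.mem_neighborFinset, Finset.mem_singleton]
                  constructor
                  · rintro ⟨rfl | rfl, hadj⟩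
                    · exact absurd hadj.symm hnwy
                    · rfl
                  · rintro rfl
                    exact ⟨Or.inr rfl, hxy.symm⟩
                rw [hCe, Finset.card_singleton]
              have hsplit := degree_split G ({w, x} : Set V) y
              rw [hC] at hsplit
              have hEy : Even (G.degree y) := Nat.not_odd_iff_even.mp hy
              obtain ⟨m, hm⟩ := hEy
              rw [Nat.odd_iff]
              omega
            · rw [fset_pair hwx, Finset.sum_pair hwx]
              have hEx : Even (G.degree x) := Nat.not_odd_iff_even.mp hx
              obtain ⟨m, hm⟩ := hEx
              obtain ⟨m', hm'⟩ := hw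
              rw [Nat.odd_iff]
              omega
      have hNw : G.neighborFinset w = fset K \ {w} := by
        ext z
        simp only [SimpleGraph.mem_neighborFinset, Finset.mem_sdiff, mem_fset, hK,
          Set.mem_setOf_eq, Finset.mem_singleton]
        constructor
        · intro hadj
          have hzw : z ≠ w := (G.ne_of_adj hadj).symm
          exact ⟨(stepA G h3not hcard3' w z hw hzw).mpr hadj, hzw⟩
        · rintro ⟨hodd, hzw⟩
          exact (stepA G h3not hcard3' w z hw hzw).mp hodd
      have hdegw : G.degree w = (fset K).card - 1 := by
        rw [← SimpleGraph.card_neighborFinset_eq_degree, hNw,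
          Finset.card_sdiff_of_subset (Finset.singleton_subset_iff.mpr (mem_fset.mpr hwK)),
          Finset.card_singleton]
      refine ⟨K, ⟨w, hwK⟩, ?_, hKcl, hedgeK⟩
      have hncard : K.ncard = (fset K).card := Set.ncard_eq_toFinset_card _ (Set.toFinite _)
      have hpos : 0 < (fset K).card := Finset.card_pos.mpr ⟨w, mem_fset.mpr hwK⟩
      rw [hdegw, Nat.odd_iff] at hw
      rw [hncard, Nat.even_iff]
      omega
  · rintro ⟨K, hKne, hKeven, hclique, hedge⟩
    obtain ⟨v, hv⟩ := hKne
    have h2mem : KDualCritical G 2 := by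
      obtain ⟨u, hu⟩ := Fintype.exists_ne_of_one_lt_card (by omega) v
      apply good2 G {v} (Set.singleton_nonempty v) ⟨u, hu⟩
      rw [cut_struct G K hclique hedge _ _ disjoint_compl_left]
      have h1 : (K ∩ {v}).ncard = 1 := by
        rw [Set.inter_eq_right.mpr (Set.singleton_subset_iff.mpr hv), Set.ncard_singleton]
      have h2 : (K ∩ {v}ᶜ).ncard = K.ncard - 1 := by
        rw [← Set.diff_eq, Set.ncard_diff_singleton_of_mem hv]
      rw [h1, h2, mul_one]
      have hpos : 0 < K.ncard := (Set.ncard_pos (Set.toFinite _)).mpr ⟨v, hv⟩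
      obtain ⟨m, hm⟩ := hKeven
      rw [Nat.odd_iff]
      omega
    refine le_antisymm (csSup_le ⟨2, h2mem⟩ ?_) (le_csSup hbdd h2mem)
    intro k hk
    by_contra hgt
    push_neg at hgt
    exact no_good_ge3 G K hclique hedge k (by omega) hk
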